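/- Let (G_N)_{N≥1}, G and (F_N)_{N≥1}, F be probability measures on ℝ such that G_N → G and F_N → F weakly, and such that the families (G_N) and (F_N) are uniformly square-integrable, i.e., sup_N ∫ x² 1{x² ≥ β} dG_N → 0 and sup_N ∫ x² 1{x² ≥ β} dF_N → 0 as β → ∞. Denote by G_N⁻¹, F_N⁻¹, G⁻¹, F⁻¹ the left-continuous quantile functions of the corresponding CDFs. Then, as N → ∞: (i) ∫₀¹ G_N⁻¹(u) F_N⁻¹(u) du → ∫₀¹ G⁻¹(u) F⁻¹(u) du, and (ii) ∫₀¹ G_N⁻¹(u) F_N⁻¹(1−u) du → ∫₀¹ G⁻¹(u) F⁻¹(1−u) du. That is, the comonotonic and countermonotonic cross-moments (the extremal values of ∫ xy over all couplings of the given marginals) converge under weak convergence plus uniform square integrability of the marginals. -/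

import Mathlib

open MeasureTheory

/-- The left-continuous quantile function of a measure `μ` on `ℝ`:
`μ⁻¹(u) = inf {y : F(y) ≥ u}` where `F(y) = μ(-∞, y]`. -/
noncomputable def quantileOf (μ : Measure ℝ) (u : ℝ) : ℝ :=
  sInf {y : ℝ | u ≤ (μ (Set.Iic y)).toReal}

open MeasureTheory Set Filter ProbabilityTheory

namespace QProof

set_option linter.unusedSectionVars false

local notation "P" => Measure.restrict (volume : Measure ℝ) (Set.Ioo (0:ℝ) 1)

/-- truncated square, `ℝ≥0∞`-valued -/
noncomputable def msq (β : ℝ) (x : ℝ) : ENNReal := ENNReal.ofReal (if β ≤ x ^ 2 then x ^ 2 else 0)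

lemma msq_measurable (β : ℝ) : Measurable (msq β) := by
  apply Measurable.ennreal_ofReal
  exact Measurable.ite (measurableSet_le measurable_const ((measurable_id.pow_const 2)))
    (measurable_id.pow_const 2) measurable_const

variable (μ : Measure ℝ) [IsProbabilityMeasure μ]

lemma quantile_eq (u : ℝ) : quantileOf μ u = sInf {y : ℝ | u ≤ cdf μ y} := by
  simp only [quantileOf, cdf_eq_real, measureReal_def]

lemma qset_nonempty {u : ℝ} (hu1 : u < 1) : {y : ℝ | u ≤ cdf μ y}.Nonempty := by
  have := (tendsto_cdf_atTop μ).eventually (eventually_gt_nhds hu1)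
  rcases this.exists with ⟨y, hy⟩
  exact ⟨y, hy.le⟩

lemma qset_bddBelow {u : ℝ} (hu : 0 < u) : BddBelow {y : ℝ | u ≤ cdf μ y} := by
  have := (tendsto_cdf_atBot μ).eventually (eventually_lt_nhds hu)
  rcases this.exists with ⟨y₀, hy₀⟩
  refine ⟨y₀, fun y hy => ?_⟩
  by_contra h
  push_neg at h
  exact absurd (le_trans hy (monotone_cdf μ h.le)) (not_le.2 hy₀)

lemma quantile_le_iff {u x : ℝ} (hu : 0 < u) (hu1 : u < 1) :
    quantileOf μ u ≤ x ↔ u ≤ cdf μ x := by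
  rw [quantile_eq]
  constructor
  · intro h
    have key : ∀ ε > (0:ℝ), u ≤ cdf μ (x + ε) := by
      intro ε hε
      have hlt : sInf {y : ℝ | u ≤ cdf μ y} < x + ε := lt_of_le_of_lt h (by linarith)
      obtain ⟨y, hy, hyx⟩ := exists_lt_of_csInf_lt (qset_nonempty μ hu1) hlt
      exact le_trans hy (monotone_cdf μ hyx.le)
    have hrc : Tendsto (cdf μ) (nhdsWithin x (Set.Ioi x)) (nhds (cdf μ x)) :=
      ((cdf μ).right_continuous x).mono_left (nhdsWithin_mono x Set.Ioi_subset_Ici_self)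
    have hev : ∀ᶠ y in nhdsWithin x (Set.Ioi x), u ≤ cdf μ y := by
      filter_upwards [self_mem_nhdsWithin] with y (hy : y ∈ Set.Ioi x)
      have := key (y - x) (by simpa using hy)
      simpa using this
    exact ge_of_tendsto hrc hev
  · intro h
    exact csInf_le (qset_bddBelow μ hu) h

lemma lt_quantile_iff {u x : ℝ} (hu : 0 < u) (hu1 : u < 1) :
    x < quantileOf μ u ↔ cdf μ x < u := by
  rw [← not_le, ← not_le, quantile_le_iff μ hu hu1]

lemma quantile_monotoneOn : MonotoneOn (quantileOf μ) (Set.Ioo (0:ℝ) 1) := by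
  intro u hu v hv huv
  rw [quantile_eq, quantile_eq]
  exact csInf_le_csInf (qset_bddBelow μ hu.1) (qset_nonempty μ hv.2)
    (fun y hy => le_trans huv hy)

lemma quantile_aemeasurable : AEMeasurable (quantileOf μ) P :=
  aemeasurable_restrict_of_monotoneOn measurableSet_Ioo (quantile_monotoneOn μ)

instance : IsProbabilityMeasure P := by
  constructor
  simp [Real.volume_Ioo]

lemma quantile_map : Measure.map (quantileOf μ) P = μ := by
  have hq := quantile_aemeasurable μ
  have : IsProbabilityMeasure (Measure.map (quantileOf μ) P) :=
    Measure.isProbabilityMeasure_map hq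
  refine Measure.ext_of_Iic _ _ (fun x => ?_)
  rw [Measure.map_apply_of_aemeasurable hq measurableSet_Iic,
    Measure.restrict_apply' measurableSet_Ioo]
  have hset : quantileOf μ ⁻¹' Set.Iic x ∩ Set.Ioo 0 1
      = Set.Ioo (0:ℝ) 1 ∩ Set.Iic (cdf μ x) := by
    ext u
    simp only [Set.mem_inter_iff, Set.mem_preimage, Set.mem_Iic, Set.mem_Ioo]
    constructor
    · rintro ⟨h, hu0, hu1⟩
      exact ⟨⟨hu0, hu1⟩, (quantile_le_iff μ hu0 hu1).1 h⟩
    · rintro ⟨⟨hu0, hu1⟩, h⟩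
      exact ⟨(quantile_le_iff μ hu0 hu1).2 h, hu0, hu1⟩
  rw [hset, ← ofReal_cdf μ x]
  rcases lt_or_eq_of_le (cdf_le_one μ x) with h1 | h1
  · have : Set.Ioo (0:ℝ) 1 ∩ Set.Iic (cdf μ x) = Set.Ioc 0 (cdf μ x) := by
      ext u
      simp only [Set.mem_inter_iff, Set.mem_Ioo, Set.mem_Iic, Set.mem_Ioc]
      constructor
      · rintro ⟨⟨h0, _⟩, h⟩; exact ⟨h0, h⟩
      · rintro ⟨h0, h⟩; exact ⟨⟨h0, lt_of_le_of_lt h h1⟩, h⟩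
    rw [this, Real.volume_Ioc, sub_zero]
  · have : Set.Ioo (0:ℝ) 1 ∩ Set.Iic (cdf μ x) = Set.Ioo 0 1 := by
      rw [Set.inter_eq_left]
      intro u hu
      simp only [Set.mem_Iic, h1]
      exact hu.2.le
    rw [this, Real.volume_Ioo, ← h1]
    norm_num

lemma quantile_lintegral (φ : ℝ → ENNReal) (hφ : Measurable φ) :
    ∫⁻ u in Set.Ioo (0:ℝ) 1, φ (quantileOf μ u) = ∫⁻ x, φ x ∂μ := by
  conv_rhs => rw [← quantile_map μ]
  exact (lintegral_map' hφ.aemeasurable (quantile_aemeasurable μ)).symm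

/-! ### cdf convergence and pointwise quantile convergence -/

lemma cdf_tendsto (μs : ℕ → Measure ℝ) (hsp : ∀ N, IsProbabilityMeasure (μs N))
    (hw : ∀ f : BoundedContinuousFunction ℝ ℝ,
      Tendsto (fun N => ∫ x, f x ∂(μs N)) atTop (nhds (∫ x, f x ∂μ)))
    {x : ℝ} (hx : μ {x} = 0) :
    Tendsto (fun N => cdf (μs N) x) atTop (nhds (cdf μ x)) := by
  let ν : ProbabilityMeasure ℝ := ⟨μ, inferInstance⟩
  let νs : ℕ → ProbabilityMeasure ℝ := fun N => ⟨μs N, hsp N⟩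
  have hconv : Tendsto νs atTop (nhds ν) := by
    rw [ProbabilityMeasure.tendsto_iff_forall_integral_tendsto]
    exact hw
  have hfr : (ν : Measure ℝ) (frontier (Set.Iic x)) = 0 := by
    rw [frontier_Iic]; exact hx
  have key := ProbabilityMeasure.tendsto_measure_of_null_frontier_of_tendsto' hconv hfr
  haveI := fun N => hsp N
  have h2 := (ENNReal.tendsto_toReal (measure_ne_top (ν : Measure ℝ) (Set.Iic x))).comp key
  simp only [Function.comp_def, cdf_eq_real, measureReal_def] at h2 ⊢; exact h2

lemma exists_nonatom (a b : ℝ) (hab : a < b) : ∃ x ∈ Set.Ioo a b, μ {x} = 0 := by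
  by_contra h
  push_neg at h
  have hsub : Set.Ioo a b ⊆ {t : ℝ | 0 < μ {a : ℝ | id a = t}} := by
    intro x hx
    simp only [Set.mem_setOf_eq, id]
    have heq : {a : ℝ | a = x} = {x} := by ext y; simp
    rw [heq]
    exact (h x hx).bot_lt
  have hcnt : (Set.Ioo a b).Countable :=
    Set.Countable.mono hsub (Measure.countable_meas_level_set_pos measurable_id)
  have := Set.Countable.le_aleph0 hcnt
  rw [Cardinal.mk_Ioo_real hab] at this
  exact absurd this (not_le.2 (Cardinal.aleph0_lt_continuum))

/-- The set of `u ∈ (0,1)` where the quantile function jumps from the right. -/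
def badSet (μ : Measure ℝ) : Set ℝ :=
  {u | u ∈ Set.Ioo (0:ℝ) 1 ∧ ∃ ε > (0:ℝ), ∀ v ∈ Set.Ioo u 1, quantileOf μ u + ε ≤ quantileOf μ v}

lemma badSet_countable : (badSet μ).Countable := by
  classical
  have hch : ∀ u ∈ badSet μ, ∃ r : ℚ, quantileOf μ u < (r:ℝ) ∧
      ∀ v ∈ Set.Ioo u 1, (r:ℝ) < quantileOf μ v := by
    rintro u ⟨hu, ε, hε, hεle⟩
    obtain ⟨r, hr1, hr2⟩ := exists_rat_btwn (show quantileOf μ u < quantileOf μ u + ε by linarith)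
    exact ⟨r, hr1, fun v hv => lt_of_lt_of_le hr2 (hεle v hv)⟩
  choose! f hf1 hf2 using hch
  have hinj : Set.InjOn f (badSet μ) := by
    have hmono : ∀ u₁ ∈ badSet μ, ∀ u₂ ∈ badSet μ, u₁ < u₂ → ((f u₁ : ℚ) : ℝ) < (f u₂ : ℝ) := by
      intro u₁ h₁ u₂ h₂ hlt
      have hu₂ : u₂ ∈ Set.Ioo u₁ 1 := ⟨hlt, h₂.1.2⟩
      calc ((f u₁ : ℚ) : ℝ) < quantileOf μ u₂ := hf2 u₁ h₁ u₂ hu₂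
        _ < (f u₂ : ℝ) := hf1 u₂ h₂
    intro u₁ h₁ u₂ h₂ heq
    by_contra hne
    rcases lt_or_gt_of_ne hne with h | h
    · exact absurd (congrArg (fun q : ℚ => (q:ℝ)) heq) (ne_of_lt (hmono u₁ h₁ u₂ h₂ h))
    · exact absurd (congrArg (fun q : ℚ => (q:ℝ)) heq).symm (ne_of_lt (hmono u₂ h₂ u₁ h₁ h))
  exact Set.MapsTo.countable_of_injOn (Set.mapsTo_univ f (badSet μ)) hinj Set.countable_univ

lemma quantile_tendsto (μs : ℕ → Measure ℝ) (hsp : ∀ N, IsProbabilityMeasure (μs N))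
    (hw : ∀ f : BoundedContinuousFunction ℝ ℝ,
      Tendsto (fun N => ∫ x, f x ∂(μs N)) atTop (nhds (∫ x, f x ∂μ)))
    {u : ℝ} (hu : u ∈ Set.Ioo (0:ℝ) 1) (hbad : u ∉ badSet μ) :
    Tendsto (fun N => quantileOf (μs N) u) atTop (nhds (quantileOf μ u)) := by
  haveI := hsp
  rw [tendsto_order]
  constructor
  · intro b hb
    obtain ⟨x, hx, hxa⟩ := exists_nonatom μ b (quantileOf μ u) hb
    have hcx : cdf μ x < u := (lt_quantile_iff μ hu.1 hu.2).1 hx.2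
    filter_upwards [(cdf_tendsto μ μs hsp hw hxa).eventually (eventually_lt_nhds hcx)] with N hN
    exact lt_trans hx.1 ((lt_quantile_iff (μs N) hu.1 hu.2).2 hN)
  · intro b hb
    have hnotbad : ∀ ε > (0:ℝ), ∃ v ∈ Set.Ioo u 1, quantileOf μ v < quantileOf μ u + ε := by
      intro ε hε
      by_contra h
      push_neg at h
      exact hbad ⟨hu, ε, hε, fun v hv => h v hv⟩
    obtain ⟨v, hv, hqv⟩ := hnotbad ((b - quantileOf μ u) / 2) (by linarith)
    have hqvb : quantileOf μ v < b := by linarith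
    obtain ⟨x, hx, hxa⟩ := exists_nonatom μ (quantileOf μ v) b hqvb
    have hv01 : v ∈ Set.Ioo (0:ℝ) 1 := ⟨lt_trans hu.1 hv.1, hv.2⟩
    have hcx : v ≤ cdf μ x := (quantile_le_iff μ hv01.1 hv01.2).1 hx.1.le
    have huv : u < cdf μ x := lt_of_lt_of_le hv.1 hcx
    filter_upwards [(cdf_tendsto μ μs hsp hw hxa).eventually (eventually_gt_nhds huv)] with N hN
    exact lt_of_le_of_lt ((quantile_le_iff (μs N) hu.1 hu.2).2 hN.le) hx.2

/-! ### square integrability transfer -/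

lemma sq_lintegral_lt_top {β : ℝ} (hβ : 0 < β)
    (h : ∫⁻ x, msq β x ∂μ ≤ ENNReal.ofReal 1) :
    ∫⁻ x, ENNReal.ofReal (x ^ 2) ∂μ < ⊤ := by
  have hpt : ∀ x : ℝ, ENNReal.ofReal (x ^ 2) ≤ msq β x + ENNReal.ofReal β := by
    intro x
    by_cases hx : β ≤ x ^ 2
    · simp only [msq, hx, if_true]
      exact le_add_right (le_refl _)
    · push_neg at hx
      refine le_trans (ENNReal.ofReal_le_ofReal hx.le) (le_add_left (le_refl _))
  calc ∫⁻ x, ENNReal.ofReal (x ^ 2) ∂μ ≤ ∫⁻ x, (msq β x + ENNReal.ofReal β) ∂μ :=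
        lintegral_mono hpt
    _ = ∫⁻ x, msq β x ∂μ + ENNReal.ofReal β * μ Set.univ := by
        rw [lintegral_add_left (msq_measurable β), lintegral_const]
    _ ≤ ENNReal.ofReal 1 + ENNReal.ofReal β * 1 := by
        rw [measure_univ]
        exact add_le_add h (le_refl _)
    _ < ⊤ := by
        rw [mul_one]
        exact ENNReal.add_lt_top.2 ⟨ENNReal.ofReal_lt_top, ENNReal.ofReal_lt_top⟩

/-- The limit measure of a uniformly square-integrable weakly convergent sequence has finite
second moment. -/
lemma limit_sq_lt_top (μs : ℕ → Measure ℝ) (hsp : ∀ N, IsProbabilityMeasure (μs N))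
    (hw : ∀ f : BoundedContinuousFunction ℝ ℝ,
      Tendsto (fun N => ∫ x, f x ∂(μs N)) atTop (nhds (∫ x, f x ∂μ)))
    (hui : ∀ δ > (0 : ℝ), ∃ β₀ : ℝ, 0 < β₀ ∧ ∀ β ≥ β₀, ∀ N,
      ∫⁻ x : ℝ, ENNReal.ofReal (if β ≤ x ^ 2 then x ^ 2 else 0) ∂(μs N) ≤ ENNReal.ofReal δ) :
    ∫⁻ x, ENNReal.ofReal (x ^ 2) ∂μ < ⊤ := by
  haveI := hsp
  obtain ⟨β₀, hβ₀, hβ⟩ := hui 1 one_pos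
  set K : ℝ := 1 + β₀ with hK
  -- bounded continuous truncations
  have main : ∀ M : ℕ, ∫⁻ x, ENNReal.ofReal (min (x ^ 2) M) ∂μ ≤ ENNReal.ofReal K := by
    intro M
    set fc : C(ℝ, ℝ) := ⟨fun x => min (x ^ 2) M, ((continuous_pow 2).min continuous_const)⟩
    have hmem : ∀ (ν : Measure ℝ), ∀ x : ℝ, fc x ∈ Set.Icc (0:ℝ) M := by
      intro ν x
      exact ⟨le_min (sq_nonneg x) (Nat.cast_nonneg M), min_le_right _ _⟩
    set fM : BoundedContinuousFunction ℝ ℝ :=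
      ⟨fc, ⟨M, fun x y => by
        have h1 := hmem μ x
        have h2 := hmem μ y
        have := Real.dist_le_of_mem_Icc h1 h2
        simpa using this⟩⟩
    have hfM_eq : ∀ x, fM x = min (x ^ 2) M := fun x => rfl
    -- each ∫ fM dμs N is ≤ K
    have hbound : ∀ N, ∫ x, fM x ∂(μs N) ≤ K := by
      intro N
      have hint : Integrable (fun x => fM x) (μs N) := fM.integrable (μs N)
      have hnn : 0 ≤ᵐ[μs N] fun x => fM x := by
        filter_upwards with x
        exact (hmem (μs N) x).1
      have heq := ofReal_integral_eq_lintegral_ofReal hint hnn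
      have hle : ∫⁻ x, ENNReal.ofReal (fM x) ∂(μs N) ≤ ENNReal.ofReal K := by
        have hpt : ∀ x : ℝ, ENNReal.ofReal (fM x) ≤ msq β₀ x + ENNReal.ofReal β₀ := by
          intro x
          rw [hfM_eq]
          by_cases hx : β₀ ≤ x ^ 2
          · simp only [msq, hx, if_true]
            exact le_trans (ENNReal.ofReal_le_ofReal (min_le_left _ _)) (le_add_right (le_refl _))
          · push_neg at hx
            exact le_trans (ENNReal.ofReal_le_ofReal (le_trans (min_le_left _ _) hx.le))
              (le_add_left (le_refl _))
        calc ∫⁻ x, ENNReal.ofReal (fM x) ∂(μs N)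
            ≤ ∫⁻ x, (msq β₀ x + ENNReal.ofReal β₀) ∂(μs N) := lintegral_mono hpt
          _ = ∫⁻ x, msq β₀ x ∂(μs N) + ENNReal.ofReal β₀ * (μs N) Set.univ := by
              rw [lintegral_add_left (msq_measurable β₀), lintegral_const]
          _ ≤ ENNReal.ofReal 1 + ENNReal.ofReal β₀ * 1 := by
              rw [measure_univ]
              have := hβ β₀ (le_refl _) N
              simp only [msq]
              exact add_le_add this (le_refl _)
          _ = ENNReal.ofReal K := by
              rw [mul_one, ← ENNReal.ofReal_add one_pos.le hβ₀.le]
      have : ENNReal.ofReal (∫ x, fM x ∂(μs N)) ≤ ENNReal.ofReal K := heq ▸ hle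
      have hKnn : (0:ℝ) ≤ K := by positivity
      rcases le_or_gt (∫ x, fM x ∂(μs N)) 0 with h0 | h0
      · linarith
      · exact (ENNReal.ofReal_le_ofReal_iff hKnn).1 this
    -- pass to the limit
    have hlim : ∫ x, fM x ∂μ ≤ K := le_of_tendsto (hw fM) (Eventually.of_forall hbound)
    have hint : Integrable (fun x => fM x) μ := fM.integrable μ
    have hnn : 0 ≤ᵐ[μ] fun x => fM x := by
      filter_upwards with x
      exact (hmem μ x).1
    rw [show (fun x : ℝ => ENNReal.ofReal (min (x ^ 2) M)) = fun x => ENNReal.ofReal (fM x) by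
      funext x; rw [hfM_eq]]
    rw [← ofReal_integral_eq_lintegral_ofReal hint hnn]
    exact ENNReal.ofReal_le_ofReal hlim
  -- monotone convergence
  have hsup : ∀ x : ℝ, (⨆ M : ℕ, ENNReal.ofReal (min (x ^ 2) M)) = ENNReal.ofReal (x ^ 2) := by
    intro x
    refine le_antisymm (iSup_le fun M => ENNReal.ofReal_le_ofReal (min_le_left _ _)) ?_
    have : ENNReal.ofReal (x ^ 2) = ENNReal.ofReal (min (x ^ 2) (⌈x ^ 2⌉₊ : ℕ)) := by
      rw [min_eq_left (Nat.le_ceil _)]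
    rw [this]
    exact le_iSup (fun M : ℕ => ENNReal.ofReal (min (x ^ 2) M)) _
  have hmeas : ∀ M : ℕ, Measurable fun x : ℝ => ENNReal.ofReal (min (x ^ 2) M) := by
    intro M
    exact ((measurable_id.pow_const 2).min measurable_const).ennreal_ofReal
  have hmono : Monotone fun (M : ℕ) (x : ℝ) => ENNReal.ofReal (min (x ^ 2) M) := by
    intro M M' hMM' x
    exact ENNReal.ofReal_le_ofReal (min_le_min (le_refl _) (Nat.cast_le.2 hMM'))
  have hMC := lintegral_iSup (μ := μ) hmeas hmono
  rw [show (fun x : ℝ => ENNReal.ofReal (x ^ 2)) = fun x => ⨆ M : ℕ, ENNReal.ofReal (min (x ^ 2) M) by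
    funext x; rw [hsup]]
  rw [hMC]
  exact lt_of_le_of_lt (iSup_le fun M => main M) ENNReal.ofReal_lt_top


/-! ### reflection -/

def σr : ℝ → ℝ := fun u => 1 - u

lemma σr_measurableEmbedding : MeasurableEmbedding σr :=
  (Homeomorph.subLeft (1:ℝ)).measurableEmbedding

lemma σr_preimage : σr ⁻¹' Set.Ioo (0:ℝ) 1 = Set.Ioo (0:ℝ) 1 := by
  ext u
  simp only [Set.mem_preimage, Set.mem_Ioo, σr]
  constructor <;> rintro ⟨h1, h2⟩ <;> constructor <;> linarith

lemma σr_measurePreserving : MeasurePreserving σr P P := by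
  refine ⟨σr_measurableEmbedding.measurable, ?_⟩
  have hmapvol : Measure.map σr (volume : Measure ℝ) = volume := by
    have : σr = (fun x : ℝ => 1 + x) ∘ (fun x : ℝ => -x) := by
      funext x; simp [σr]; ring
    rw [this, ← Measure.map_map (measurable_const_add 1) measurable_neg,
      Measure.map_neg_eq_self (volume : Measure ℝ)]
    exact map_add_left_eq_self volume 1
  conv_lhs => rw [show Set.Ioo (0:ℝ) 1 = σr ⁻¹' Set.Ioo (0:ℝ) 1 from σr_preimage.symm]
  rw [← Measure.restrict_map σr_measurableEmbedding.measurable measurableSet_Ioo, hmapvol]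

/-! ### MemLp of quantile products -/

lemma prod_memLp (μ ν : Measure ℝ) [IsProbabilityMeasure μ] [IsProbabilityMeasure ν]
    (hμ : ∫⁻ x, ENNReal.ofReal (x ^ 2) ∂μ < ⊤) (hν : ∫⁻ x, ENNReal.ofReal (x ^ 2) ∂ν < ⊤)
    (σ : ℝ → ℝ) (hσe : MeasurableEmbedding σ) (hσmp : MeasurePreserving σ P P) :
    MemLp (fun u => quantileOf μ u * quantileOf ν (σ u)) 1 P := by
  have hgm : AEMeasurable (quantileOf μ) P := quantile_aemeasurable μ
  have hhm : AEMeasurable (fun u => quantileOf ν (σ u)) P :=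
    (quantile_aemeasurable ν).comp_quasiMeasurePreserving hσmp.quasiMeasurePreserving
  refine ⟨(hgm.mul hhm).aestronglyMeasurable, ?_⟩
  rw [eLpNorm_one_eq_lintegral_enorm]
  have hpt : ∀ u : ℝ, (‖quantileOf μ u * quantileOf ν (σ u)‖₊ : ENNReal)
      ≤ ENNReal.ofReal ((quantileOf μ u) ^ 2) + ENNReal.ofReal ((quantileOf ν (σ u)) ^ 2) := by
    intro u
    set a := quantileOf μ u
    set b := quantileOf ν (σ u)
    rw [← enorm_eq_nnnorm, Real.enorm_eq_ofReal_abs, ← ENNReal.ofReal_add (sq_nonneg a) (sq_nonneg b)]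
    refine ENNReal.ofReal_le_ofReal ?_
    nlinarith [abs_mul a b, sq_abs a, sq_abs b, sq_nonneg (|a| - |b|), abs_nonneg a, abs_nonneg b]
  calc ∫⁻ u, (‖quantileOf μ u * quantileOf ν (σ u)‖₊ : ENNReal) ∂P
      ≤ ∫⁻ u, (ENNReal.ofReal ((quantileOf μ u) ^ 2)
          + ENNReal.ofReal ((quantileOf ν (σ u)) ^ 2)) ∂P := lintegral_mono hpt
    _ = ∫⁻ u, ENNReal.ofReal ((quantileOf μ u) ^ 2) ∂P
          + ∫⁻ u, ENNReal.ofReal ((quantileOf ν (σ u)) ^ 2) ∂P := by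
        exact lintegral_add_left'
          (((measurable_id.pow_const 2).ennreal_ofReal).comp_aemeasurable hgm) _
    _ = ∫⁻ x, ENNReal.ofReal (x ^ 2) ∂μ + ∫⁻ x, ENNReal.ofReal (x ^ 2) ∂ν := by
        congr 1
        · exact quantile_lintegral μ _ ((measurable_id.pow_const 2).ennreal_ofReal)
        · rw [hσmp.lintegral_comp_emb hσe (fun v => ENNReal.ofReal ((quantileOf ν v) ^ 2))]
          exact quantile_lintegral ν _ ((measurable_id.pow_const 2).ennreal_ofReal)
    _ < ⊤ := ENNReal.add_lt_top.2 ⟨hμ, hν⟩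

/-! ### the master convergence lemma -/

set_option maxHeartbeats 2000000 in
lemma master (μG μF : Measure ℝ) [IsProbabilityMeasure μG] [IsProbabilityMeasure μF]
    (μGs μFs : ℕ → Measure ℝ)
    (hGsp : ∀ N, IsProbabilityMeasure (μGs N)) (hFsp : ∀ N, IsProbabilityMeasure (μFs N))
    (hGw : ∀ f : BoundedContinuousFunction ℝ ℝ,
      Tendsto (fun N => ∫ x, f x ∂(μGs N)) atTop (nhds (∫ x, f x ∂μG)))
    (hFw : ∀ f : BoundedContinuousFunction ℝ ℝ,
      Tendsto (fun N => ∫ x, f x ∂(μFs N)) atTop (nhds (∫ x, f x ∂μF)))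
    (hGui : ∀ δ > (0 : ℝ), ∃ β₀ : ℝ, 0 < β₀ ∧ ∀ β ≥ β₀, ∀ N,
      ∫⁻ x : ℝ, ENNReal.ofReal (if β ≤ x ^ 2 then x ^ 2 else 0) ∂(μGs N) ≤ ENNReal.ofReal δ)
    (hFui : ∀ δ > (0 : ℝ), ∃ β₀ : ℝ, 0 < β₀ ∧ ∀ β ≥ β₀, ∀ N,
      ∫⁻ x : ℝ, ENNReal.ofReal (if β ≤ x ^ 2 then x ^ 2 else 0) ∂(μFs N) ≤ ENNReal.ofReal δ)
    (σ : ℝ → ℝ) (hσe : MeasurableEmbedding σ) (hσmp : MeasurePreserving σ P P) :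
    Tendsto (fun N => ∫ u, quantileOf (μGs N) u * quantileOf (μFs N) (σ u) ∂P) atTop
      (nhds (∫ u, quantileOf μG u * quantileOf μF (σ u) ∂P)) := by
  haveI := hGsp; haveI := hFsp
  set f : ℕ → ℝ → ℝ := fun N u => quantileOf (μGs N) u * quantileOf (μFs N) (σ u) with hf
  set flim : ℝ → ℝ := fun u => quantileOf μG u * quantileOf μF (σ u) with hflim
  have hgm : ∀ N, AEMeasurable (quantileOf (μGs N)) P := fun N => quantile_aemeasurable _
  have hhm : ∀ N, AEMeasurable (fun u => quantileOf (μFs N) (σ u)) P := fun N =>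
    (quantile_aemeasurable (μFs N)).comp_quasiMeasurePreserving hσmp.quasiMeasurePreserving
  have hfm : ∀ N, AEStronglyMeasurable (f N) P := fun N =>
    ((hgm N).mul (hhm N)).aestronglyMeasurable
  -- a.e. convergence
  have haeG : ∀ᵐ u ∂P, Tendsto (fun N => quantileOf (μGs N) u) atTop (nhds (quantileOf μG u)) := by
    have h1 : ∀ᵐ u ∂P, u ∈ Set.Ioo (0:ℝ) 1 := ae_restrict_mem measurableSet_Ioo
    have h2 : ∀ᵐ u ∂P, u ∉ badSet μG := by
      have hz : Measure.restrict (volume : Measure ℝ) (Set.Ioo (0:ℝ) 1) (badSet μG) = 0 :=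
        le_antisymm (le_trans (Measure.restrict_le_self _)
          (le_of_eq ((badSet_countable μG).measure_zero _))) (zero_le)
      exact (measure_eq_zero_iff_ae_notMem).1 hz
    filter_upwards [h1, h2] with u hu hbad
    exact quantile_tendsto μG μGs hGsp hGw hu hbad
  have haeF : ∀ᵐ v ∂P, Tendsto (fun N => quantileOf (μFs N) v) atTop (nhds (quantileOf μF v)) := by
    have h1 : ∀ᵐ u ∂P, u ∈ Set.Ioo (0:ℝ) 1 := ae_restrict_mem measurableSet_Ioo
    have h2 : ∀ᵐ u ∂P, u ∉ badSet μF := by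
      have hz : Measure.restrict (volume : Measure ℝ) (Set.Ioo (0:ℝ) 1) (badSet μF) = 0 :=
        le_antisymm (le_trans (Measure.restrict_le_self _)
          (le_of_eq ((badSet_countable μF).measure_zero _))) (zero_le)
      exact (measure_eq_zero_iff_ae_notMem).1 hz
    filter_upwards [h1, h2] with u hu hbad
    exact quantile_tendsto μF μFs hFsp hFw hu hbad
  have haeFσ : ∀ᵐ u ∂P,
      Tendsto (fun N => quantileOf (μFs N) (σ u)) atTop (nhds (quantileOf μF (σ u))) :=
    hσmp.quasiMeasurePreserving.ae haeF
  have hae : ∀ᵐ u ∂P, Tendsto (fun N => f N u) atTop (nhds (flim u)) := by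
    filter_upwards [haeG, haeFσ] with u h1 h2
    exact h1.mul h2
  -- uniform integrability
  have hui : UnifIntegrable f 1 P := by
    refine unifIntegrable_of le_rfl ENNReal.one_ne_top hfm (fun ε hε => ?_)
    obtain ⟨β₁, hβ₁, hG⟩ := hGui (ε/2) (half_pos hε)
    obtain ⟨β₂, hβ₂, hF⟩ := hFui (ε/2) (half_pos hε)
    set C : NNReal := (max β₁ β₂).toNNReal with hC
    have hCR : (C : ℝ) = max β₁ β₂ :=
      Real.coe_toNNReal _ (le_trans hβ₁.le (le_max_left _ _))
    refine ⟨C, fun N => ?_⟩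
    rw [eLpNorm_one_eq_lintegral_enorm]
    have hpt : ∀ u : ℝ, (‖Set.indicator {x | C ≤ ‖f N x‖₊} (f N) u‖₊ : ENNReal)
        ≤ msq (C:ℝ) (quantileOf (μGs N) u) + msq (C:ℝ) (quantileOf (μFs N) (σ u)) := by
      intro u
      set a := quantileOf (μGs N) u
      set b := quantileOf (μFs N) (σ u)
      by_cases hu : u ∈ {x | C ≤ ‖f N x‖₊}
      · rw [Set.indicator_of_mem hu]
        have habs : (C:ℝ) ≤ |a * b| := by
          have := NNReal.coe_le_coe.2 hu
          rwa [coe_nnnorm, Real.norm_eq_abs] at this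
        have key : |a * b| ≤ (if (C:ℝ) ≤ a^2 then a^2 else 0) + (if (C:ℝ) ≤ b^2 then b^2 else 0) := by
          rcases le_total |a| |b| with hab | hab
          · have hb2 : (C:ℝ) ≤ b^2 := by
              nlinarith [abs_mul a b, sq_abs b, abs_nonneg a, abs_nonneg b]
            have h2 : |a * b| ≤ b^2 := by
              nlinarith [abs_mul a b, sq_abs b, abs_nonneg a, abs_nonneg b]
            rw [if_pos hb2]
            have : (0:ℝ) ≤ (if (C:ℝ) ≤ a^2 then a^2 else 0) := by positivity
            linarith
          · have hb2 : (C:ℝ) ≤ a^2 := by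
              nlinarith [abs_mul a b, sq_abs a, abs_nonneg a, abs_nonneg b]
            have h2 : |a * b| ≤ a^2 := by
              nlinarith [abs_mul a b, sq_abs a, abs_nonneg a, abs_nonneg b]
            rw [if_pos hb2]
            have : (0:ℝ) ≤ (if (C:ℝ) ≤ b^2 then b^2 else 0) := by positivity
            linarith
        have hnn1 : (0:ℝ) ≤ (if (C:ℝ) ≤ a^2 then a^2 else 0) := by positivity
        have hnn2 : (0:ℝ) ≤ (if (C:ℝ) ≤ b^2 then b^2 else 0) := by positivity
        calc (‖f N u‖₊ : ENNReal) = ENNReal.ofReal |a * b| := by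
              rw [← enorm_eq_nnnorm, Real.enorm_eq_ofReal_abs]
          _ ≤ ENNReal.ofReal ((if (C:ℝ) ≤ a^2 then a^2 else 0)
              + (if (C:ℝ) ≤ b^2 then b^2 else 0)) := ENNReal.ofReal_le_ofReal key
          _ = msq (C:ℝ) a + msq (C:ℝ) b := by
              rw [ENNReal.ofReal_add hnn1 hnn2]; rfl
      · rw [Set.indicator_of_notMem hu]
        simp only [nnnorm_zero, ENNReal.coe_zero]
        exact zero_le
    calc ∫⁻ u, (‖Set.indicator {x | C ≤ ‖f N x‖₊} (f N) u‖₊ : ENNReal) ∂P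
        ≤ ∫⁻ u, (msq (C:ℝ) (quantileOf (μGs N) u)
            + msq (C:ℝ) (quantileOf (μFs N) (σ u))) ∂P := lintegral_mono hpt
      _ = ∫⁻ u, msq (C:ℝ) (quantileOf (μGs N) u) ∂P
            + ∫⁻ u, msq (C:ℝ) (quantileOf (μFs N) (σ u)) ∂P :=
          lintegral_add_left' ((msq_measurable _).comp_aemeasurable (hgm N)) _
      _ ≤ ENNReal.ofReal (ε/2) + ENNReal.ofReal (ε/2) := by
          have e1 : ∫⁻ u, msq (C:ℝ) (quantileOf (μGs N) u) ∂P = ∫⁻ x, msq (C:ℝ) x ∂(μGs N) :=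
            quantile_lintegral (μGs N) _ (msq_measurable _)
          have e2 : ∫⁻ u, msq (C:ℝ) (quantileOf (μFs N) (σ u)) ∂P
              = ∫⁻ x, msq (C:ℝ) x ∂(μFs N) := by
            rw [hσmp.lintegral_comp_emb hσe (fun v => msq (C:ℝ) (quantileOf (μFs N) v))]
            exact quantile_lintegral (μFs N) _ (msq_measurable _)
          rw [e1, e2]
          refine add_le_add ?_ ?_
          · have := hG (C:ℝ) (hCR ▸ le_max_left _ _) N
            simpa [msq] using this
          · have := hF (C:ℝ) (hCR ▸ le_max_right _ _) N
            simpa [msq] using this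
      _ = ENNReal.ofReal ε := by
          rw [← ENNReal.ofReal_add (half_pos hε).le (half_pos hε).le, add_halves]
  -- second moments
  have hsqG : ∀ N, ∫⁻ x, ENNReal.ofReal (x ^ 2) ∂(μGs N) < ⊤ := by
    intro N
    obtain ⟨β₀, hβ₀, hβ⟩ := hGui 1 one_pos
    exact sq_lintegral_lt_top (μGs N) hβ₀ (by simpa [msq] using hβ β₀ le_rfl N)
  have hsqF : ∀ N, ∫⁻ x, ENNReal.ofReal (x ^ 2) ∂(μFs N) < ⊤ := by
    intro N
    obtain ⟨β₀, hβ₀, hβ⟩ := hFui 1 one_pos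
    exact sq_lintegral_lt_top (μFs N) hβ₀ (by simpa [msq] using hβ β₀ le_rfl N)
  have hmemN : ∀ N, MemLp (f N) 1 P := fun N =>
    prod_memLp (μGs N) (μFs N) (hsqG N) (hsqF N) σ hσe hσmp
  have hmemlim : MemLp flim 1 P :=
    prod_memLp μG μF (limit_sq_lt_top μG μGs hGsp hGw hGui)
      (limit_sq_lt_top μF μFs hFsp hFw hFui) σ hσe hσmp
  -- Vitali
  have hvit := tendsto_Lp_finite_of_tendsto_ae le_rfl ENNReal.one_ne_top hfm hmemlim hui hae
  refine tendsto_integral_of_L1 flim (memLp_one_iff_integrable.1 hmemlim).aestronglyMeasurable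
    (Eventually.of_forall fun N => memLp_one_iff_integrable.1 (hmemN N)) ?_
  simpa only [eLpNorm_one_eq_lintegral_enorm, Pi.sub_apply] using hvit

end QProof


/-- **Convergence of the extremal (comonotonic and countermonotonic) cross-moments.** If
`G_N → G` and `F_N → F` weakly and the families `(G_N)` and `(F_N)` are uniformly
square-integrable, then `∫₀¹ G_N⁻¹(u) F_N⁻¹(u) du → ∫₀¹ G⁻¹(u) F⁻¹(u) du` and
`∫₀¹ G_N⁻¹(u) F_N⁻¹(1-u) du → ∫₀¹ G⁻¹(u) F⁻¹(1-u) du`. -/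
theorem stmt_17 (μGs μFs : ℕ → Measure ℝ) (μG μF : Measure ℝ)
    [IsProbabilityMeasure μG] [IsProbabilityMeasure μF]
    (hGsp : ∀ N, IsProbabilityMeasure (μGs N)) (hFsp : ∀ N, IsProbabilityMeasure (μFs N))
    (hGw : ∀ f : BoundedContinuousFunction ℝ ℝ,
      Filter.Tendsto (fun N => ∫ x, f x ∂(μGs N)) Filter.atTop (nhds (∫ x, f x ∂μG)))
    (hFw : ∀ f : BoundedContinuousFunction ℝ ℝ,
      Filter.Tendsto (fun N => ∫ x, f x ∂(μFs N)) Filter.atTop (nhds (∫ x, f x ∂μF)))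
    (hGui : ∀ δ > (0 : ℝ), ∃ β₀ : ℝ, 0 < β₀ ∧ ∀ β ≥ β₀, ∀ N,
      ∫⁻ x : ℝ, ENNReal.ofReal (if β ≤ x ^ 2 then x ^ 2 else 0) ∂(μGs N)
        ≤ ENNReal.ofReal δ)
    (hFui : ∀ δ > (0 : ℝ), ∃ β₀ : ℝ, 0 < β₀ ∧ ∀ β ≥ β₀, ∀ N,
      ∫⁻ x : ℝ, ENNReal.ofReal (if β ≤ x ^ 2 then x ^ 2 else 0) ∂(μFs N)
        ≤ ENNReal.ofReal δ) :
    Filter.Tendsto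
        (fun N => ∫ u in (0:ℝ)..1, quantileOf (μGs N) u * quantileOf (μFs N) u)
        Filter.atTop (nhds (∫ u in (0:ℝ)..1, quantileOf μG u * quantileOf μF u))
      ∧ Filter.Tendsto
        (fun N => ∫ u in (0:ℝ)..1, quantileOf (μGs N) u * quantileOf (μFs N) (1 - u))
        Filter.atTop (nhds (∫ u in (0:ℝ)..1, quantileOf μG u * quantileOf μF (1 - u))) := by

  have hconv : ∀ k : ℝ → ℝ, ∫ u in (0:ℝ)..1, k u
      = ∫ u, k u ∂(Measure.restrict (volume : Measure ℝ) (Set.Ioo (0:ℝ) 1)) := by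
    intro k
    rw [intervalIntegral.integral_of_le zero_le_one,
      ← Measure.restrict_congr_set Ioo_ae_eq_Ioc]
  constructor
  · have h := QProof.master μG μF μGs μFs hGsp hFsp hGw hFw hGui hFui id
      MeasurableEmbedding.id (MeasurePreserving.id _)
    simp only [id] at h
    simp_rw [hconv]
    exact h
  · have h := QProof.master μG μF μGs μFs hGsp hFsp hGw hFw hGui hFui QProof.σr
      QProof.σr_measurableEmbedding QProof.σr_measurePreserving
    simp only [QProof.σr] at h
    simp_rw [hconv]
    exact h
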